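/- Let h : ℝⁿ → ℝ be twice continuously differentiable with relative degree two (L_g h ≡ 0), and define η_b = (h, L_f h)ᵀ. Suppose along solutions d/dt(L_f h)(x(t)) ≥ -k_p·h(x(t)) - k_d·L_f h(x(t)) - C with k_p, k_d > 0 such that the polynomial s² + k_d s + k_p has two real roots -λ₁, -λ₂ < 0. Then h(x(t)) + C/k_p ≥ 0 for all t ≥ t₀ whenever the initial condition satisfies h(t₀) + C/k_p ≥ 0 and L_f h(t₀) + λ₁(h(t₀) + C/k_p) ≥ 0. -/

import Mathlib

open Set

private lemma aux_nonneg (t₀ T lam : ℝ) (y y' : ℝ → ℝ)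
    (hd : ∀ t ∈ Ico t₀ T, HasDerivAt y (y' t) t)
    (hineq : ∀ t ∈ Ico t₀ T, 0 ≤ y' t + lam * y t)
    (h0 : 0 ≤ y t₀) : ∀ t ∈ Ico t₀ T, 0 ≤ y t := by
  intro t ht
  set g : ℝ → ℝ := fun s => y s * Real.exp (lam * s) with hg
  have hgd : ∀ s ∈ Ico t₀ T,
      HasDerivAt g ((y' s + lam * y s) * Real.exp (lam * s)) s := by
    intro s hs
    have he : HasDerivAt (fun u : ℝ => Real.exp (lam * u))
        (Real.exp (lam * s) * lam) s := by
      simpa using ((hasDerivAt_id s).const_mul lam).exp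
    have : HasDerivAt (fun u => y u * Real.exp (lam * u))
        (y' s * Real.exp (lam * s) + y s * (Real.exp (lam * s) * lam)) s := (hd s hs).mul he
    convert this using 1
    ring
  have hsub : Icc t₀ t ⊆ Ico t₀ T := Icc_subset_Ico_right ht.2
  have hmono : MonotoneOn g (Icc t₀ t) := by
    apply monotoneOn_of_hasDerivWithinAt_nonneg (convex_Icc t₀ t)
      (f' := fun s => (y' s + lam * y s) * Real.exp (lam * s))
    · intro s hs
      exact ((hgd s (hsub hs)).continuousAt).continuousWithinAt
    · intro s hs
      exact ((hgd s (hsub (interior_subset hs))).hasDerivWithinAt)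
    · intro s hs
      exact mul_nonneg (hineq s (hsub (interior_subset hs))) (Real.exp_nonneg _)
  have h1 : g t₀ ≤ g t :=
    hmono (left_mem_Icc.2 ht.1) (right_mem_Icc.2 ht.1) ht.1
  have h2 : 0 ≤ g t₀ := mul_nonneg h0 (Real.exp_nonneg _)
  have h3 : 0 ≤ y t * Real.exp (lam * t) := le_trans h2 h1
  nlinarith [Real.exp_pos (lam * t), h3]

/-- Relative-degree-two exponential barrier cascade (Example 3): if along a
solution `d/dt h(x(t)) = L_f h(x(t))`,
`d/dt (L_f h)(x(t)) ≥ -k_p h(x(t)) - k_d L_f h(x(t)) - C`, where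
`s² + k_d s + k_p` has real roots `-λ₁, -λ₂ < 0`, and initially
`h + C/k_p ≥ 0` and `L_f h + λ₁(h + C/k_p) ≥ 0`, then `h(x(t)) + C/k_p ≥ 0`
for all `t ∈ [t₀, T)`. -/
theorem stmt17 (n : ℕ) (h : EuclideanSpace ℝ (Fin n) → ℝ)
    (x : ℝ → EuclideanSpace ℝ (Fin n)) (t₀ T : ℝ) (hT : t₀ < T)
    (Lfh D2 : ℝ → ℝ)  -- values of L_f h and d/dt(L_f h) along the solution
    (kp kd C lam₁ lam₂ : ℝ) (hkp : 0 < kp) (hkd : 0 < kd) (hC : 0 ≤ C)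
    (hlam₁ : 0 < lam₁) (hlam₂ : 0 < lam₂)
    (hroots : lam₁ + lam₂ = kd ∧ lam₁ * lam₂ = kp)
    (hdh : ∀ t ∈ Ico t₀ T, HasDerivAt (fun s => h (x s)) (Lfh t) t)
    (hdLfh : ∀ t ∈ Ico t₀ T, HasDerivAt Lfh (D2 t) t)
    (hineq : ∀ t ∈ Ico t₀ T, D2 t ≥ -kp * h (x t) - kd * Lfh t - C)
    (hinit₁ : h (x t₀) + C / kp ≥ 0)
    (hinit₂ : Lfh t₀ + lam₁ * (h (x t₀) + C / kp) ≥ 0) :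
    ∀ t ∈ Ico t₀ T, h (x t) + C / kp ≥ 0 := by
  obtain ⟨hr1, hr2⟩ := hroots
  -- Step 1: ζ := Lfh + lam₁ (h + C/kp) is nonneg
  have hzeta : ∀ t ∈ Ico t₀ T, 0 ≤ Lfh t + lam₁ * (h (x t) + C / kp) := by
    apply aux_nonneg t₀ T lam₂ _ (fun t => D2 t + lam₁ * Lfh t)
    · intro t ht
      exact (hdLfh t ht).add (((hdh t ht).add_const (C / kp)).const_mul lam₁)
    · intro t ht
      have := hineq t ht
      have hCkp : kp * (C / kp) = C := mul_div_cancel₀ C hkp.ne'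
      have expand : D2 t + lam₁ * Lfh t + lam₂ * (Lfh t + lam₁ * (h (x t) + C / kp))
          = D2 t + kd * Lfh t + (kp * h (x t) + kp * (C / kp)) := by
        rw [← hr1, ← hr2]; ring
      linarith [expand, hCkp]
    · exact hinit₂
  -- Step 2
  intro t ht
  refine aux_nonneg t₀ T lam₁ (fun s => h (x s) + C / kp) Lfh ?_ ?_ hinit₁ t ht
  · intro s hs
    exact (hdh s hs).add_const (C / kp)
  · intro s hs
    have := hzeta s hs
    linarith
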